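/- For every t ∈ ℕ there is a constant c_t > 0 such that every f ∈ C^{t+1}(ℝⁿ) with all derivatives up to order t+1 bounded satisfies ‖f‖_{C^t} ≤ c_t · ‖f‖_{C⁰}^{1/(t+1)} · ‖f‖_{C^{t+1}}^{t/(t+1)}, where ‖f‖_{C^k} := max_{|α| ≤ k} ‖∂^α f‖_∞. -/

import Mathlib

/-- The partial derivative in the `i`-th coordinate direction. -/
noncomputable def pd {n : ℕ} {F : Type*} [NormedAddCommGroup F] [NormedSpace ℝ F]
    (i : Fin n) (f : EuclideanSpace ℝ (Fin n) → F) : EuclideanSpace ℝ (Fin n) → F :=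
  fun x => fderiv ℝ f x (EuclideanSpace.single i 1)

/-- The iterated partial derivative `∂^α` for a multi-index `α : Fin n → ℕ`. -/
noncomputable def mderiv {n : ℕ} {F : Type*} [NormedAddCommGroup F] [NormedSpace ℝ F]
    (α : Fin n → ℕ) (f : EuclideanSpace ℝ (Fin n) → F) : EuclideanSpace ℝ (Fin n) → F :=
  (List.finRange n).foldr (fun i g => (pd i)^[α i] g) f

/-- The C^k norm `‖f‖_{C^k} = max_{|α| ≤ k} ‖∂^α f‖_∞`. -/
noncomputable def CkNorm {n : ℕ} (k : ℕ) (f : EuclideanSpace ℝ (Fin n) → ℝ) : ℝ :=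
  ⨆ α : {α : Fin n → ℕ // ∑ i, α i ≤ k}, ⨆ x, ‖mderiv α.1 f x‖

namespace CkInterpAux

open List Set

variable {n : ℕ}

/-! ### Smoothness of iterated partial derivatives -/

lemma contDiff_of_nat_le {f : EuclideanSpace ℝ (Fin n) → ℝ} {a b : ℕ}
    (hf : ContDiff ℝ (b : ℕ) f) (h : a ≤ b) : ContDiff ℝ (a : ℕ) f :=
  hf.of_le (by exact_mod_cast Nat.cast_le.2 h)

lemma pd_contDiff {i : Fin n} {f : EuclideanSpace ℝ (Fin n) → ℝ} {k : ℕ}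
    (hf : ContDiff ℝ (k + 1 : ℕ) f) : ContDiff ℝ (k : ℕ) (pd i f) := by
  have h : ContDiff ℝ (k : ℕ) (fderiv ℝ f) := by
    have := (contDiff_succ_iff_fderiv (n := (k:ℕ∞)) (f := f)).1 (by exact_mod_cast hf)
    exact this.2.2
  exact h.clm_apply contDiff_const

lemma pd_iter_contDiff {i : Fin n} {f : EuclideanSpace ℝ (Fin n) → ℝ} {k q : ℕ}
    (hf : ContDiff ℝ (k + q : ℕ) f) : ContDiff ℝ (k : ℕ) ((pd i)^[q] f) := by
  induction q generalizing f k with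
  | zero => simpa using hf
  | succ q ih =>
      rw [Function.iterate_succ_apply']
      exact pd_contDiff (ih (contDiff_of_nat_le hf (by omega)))

lemma foldr_contDiff {f : EuclideanSpace ℝ (Fin n) → ℝ} (α : Fin n → ℕ) (l : List (Fin n)) {k : ℕ}
    (hf : ContDiff ℝ (k + (l.map α).sum : ℕ) f) :
    ContDiff ℝ (k : ℕ) (l.foldr (fun i g => (pd i)^[α i] g) f) := by
  induction l generalizing k with
  | nil => simpa using hf
  | cons j l ih =>
      simp only [foldr_cons]
      exact pd_iter_contDiff (ih (k := k + α j) (contDiff_of_nat_le hf (by simp; omega)))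

lemma mderiv_contDiff {f : EuclideanSpace ℝ (Fin n) → ℝ} (α : Fin n → ℕ) {k : ℕ}
    (hf : ContDiff ℝ (k + ∑ i, α i : ℕ) f) : ContDiff ℝ (k : ℕ) (mderiv α f) := by
  apply foldr_contDiff
  rwa [show ((List.finRange n).map α).sum = ∑ i, α i from (Fin.sum_univ_def α).symm]

/-! ### Structural lemmas on `mderiv` -/

lemma foldr_congr {f : EuclideanSpace ℝ (Fin n) → ℝ} {α β : Fin n → ℕ} (l : List (Fin n))
    (h : ∀ j ∈ l, α j = β j) :
    l.foldr (fun i g => (pd i)^[α i] g) f = l.foldr (fun i g => (pd i)^[β i] g) f := by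
  induction l with
  | nil => rfl
  | cons j l ih =>
      simp only [foldr_cons]
      rw [h j mem_cons_self, ih (fun x hx => h x (mem_cons_of_mem _ hx))]

lemma foldr_pull {f : EuclideanSpace ℝ (Fin n) → ℝ} {α : Fin n → ℕ} {i : Fin n}
    (hi : 1 ≤ α i) (hlow : ∀ j, j < i → α j = 0) :
    ∀ l : List (Fin n), l.Pairwise (· < ·) → i ∈ l →
      l.foldr (fun j g => (pd j)^[α j] g) f =
        pd i (l.foldr (fun j g => (pd j)^[Function.update α i (α i - 1) j] g) f) := by
  intro l
  induction l with
  | nil => intro _ h; simp at h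
  | cons j l ih =>
      intro hpw hmem
      have hpw' := (List.pairwise_cons.1 hpw).2
      have hhead := (List.pairwise_cons.1 hpw).1
      rcases List.mem_cons.1 hmem with rfl | hmem'
      · have hnotmem : i ∉ l := fun hx => lt_irrefl i (hhead i hx)
        have hcongr : l.foldr (fun j g => (pd j)^[Function.update α i (α i - 1) j] g) f
            = l.foldr (fun j g => (pd j)^[α j] g) f :=
          foldr_congr l (fun x hx => by
            apply Function.update_of_ne
            rintro rfl; exact hnotmem hx)
        simp only [foldr_cons, hcongr, Function.update_self]
        obtain ⟨k, hk⟩ : ∃ k, α i = k + 1 := ⟨α i - 1, by omega⟩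
        rw [hk]
        simp only [Nat.add_sub_cancel]
        rw [Function.iterate_succ_apply']
      · have hji : j < i := hhead i hmem'
        have hj0 : α j = 0 := hlow j hji
        have hj0' : Function.update α i (α i - 1) j = 0 := by
          rw [Function.update_of_ne (ne_of_lt hji)]; exact hj0
        simp only [foldr_cons, hj0, hj0', Function.iterate_zero, id]
        exact ih hpw' hmem'

lemma mderiv_pull {f : EuclideanSpace ℝ (Fin n) → ℝ} {α : Fin n → ℕ} {i : Fin n}
    (hi : 1 ≤ α i) (hlow : ∀ j, j < i → α j = 0) :
    mderiv α f = pd i (mderiv (Function.update α i (α i - 1)) f) :=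
  foldr_pull hi hlow (List.finRange n) (List.pairwise_lt_finRange n) (List.mem_finRange i)

lemma foldr_eq_self {f : EuclideanSpace ℝ (Fin n) → ℝ} {α : Fin n → ℕ} (l : List (Fin n))
    (h : ∀ j ∈ l, α j = 0) : l.foldr (fun i g => (pd i)^[α i] g) f = f := by
  induction l with
  | nil => rfl
  | cons j l ih =>
      simp only [foldr_cons, h j mem_cons_self, Function.iterate_zero, id]
      exact ih (fun x hx => h x (mem_cons_of_mem _ hx))

lemma mderiv_eq_self {f : EuclideanSpace ℝ (Fin n) → ℝ} {α : Fin n → ℕ}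
    (h : ∀ i, α i = 0) : mderiv α f = f :=
  foldr_eq_self _ (fun j _ => h j)

lemma pd_zero (i : Fin n) : pd i (fun _ => (0:ℝ)) = fun _ => (0:ℝ) := by
  funext x
  simp [pd]

lemma pd_iter_zero (i : Fin n) (q : ℕ) :
    (pd i)^[q] (fun _ => (0:ℝ)) = fun _ => (0:ℝ) := by
  induction q with
  | zero => rfl
  | succ q ih => rw [Function.iterate_succ_apply, pd_zero, ih]

lemma mderiv_zero_fun (α : Fin n → ℕ) :
    mderiv α (fun _ => (0:ℝ)) = fun _ => (0:ℝ) := by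
  unfold mderiv
  induction (List.finRange n) with
  | nil => rfl
  | cons j l ih => simp only [foldr_cons, ih, pd_iter_zero]

/-! ### `CkNorm` infrastructure -/

instance multiIdxFinite (k : ℕ) : Finite {α : Fin n → ℕ // ∑ i, α i ≤ k} := by
  apply Finite.of_injective (f := fun (α : {α : Fin n → ℕ // ∑ i, α i ≤ k}) =>
    (fun i => (⟨α.1 i, by
      have h1 : α.1 i ≤ ∑ j, α.1 j :=
        Finset.single_le_sum (fun _ _ => Nat.zero_le _) (Finset.mem_univ i)
      have := α.2; omega⟩ : Fin (k+1))))
  intro α β h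
  apply Subtype.ext; funext i
  exact congrArg Fin.val (congrFun h i)

instance multiIdxNonempty (k : ℕ) : Nonempty {α : Fin n → ℕ // ∑ i, α i ≤ k} :=
  ⟨⟨fun _ => 0, by simp⟩⟩

lemma supx_le {f : EuclideanSpace ℝ (Fin n) → ℝ} {M : ℝ} (h : ∀ x, ‖f x‖ ≤ M) :
    (⨆ x, ‖f x‖) ≤ M := ciSup_le h

lemma le_supx {f : EuclideanSpace ℝ (Fin n) → ℝ} {M : ℝ} (h : ∀ x, ‖f x‖ ≤ M)
    (x : EuclideanSpace ℝ (Fin n)) : ‖f x‖ ≤ ⨆ x, ‖f x‖ :=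
  le_ciSup ⟨M, by rintro _ ⟨y, rfl⟩; exact h y⟩ x

lemma CkNorm_le {f : EuclideanSpace ℝ (Fin n) → ℝ} {k : ℕ} {M : ℝ}
    (h : ∀ α : Fin n → ℕ, ∑ i, α i ≤ k → (⨆ x, ‖mderiv α f x‖) ≤ M) :
    CkNorm k f ≤ M := ciSup_le fun α => h α.1 α.2

lemma le_CkNorm {f : EuclideanSpace ℝ (Fin n) → ℝ} {k : ℕ} (α : Fin n → ℕ)
    (hα : ∑ i, α i ≤ k) : (⨆ x, ‖mderiv α f x‖) ≤ CkNorm k f :=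
  le_ciSup (f := fun β : {α : Fin n → ℕ // ∑ i, α i ≤ k} => ⨆ x, ‖mderiv β.1 f x‖)
    (Set.Finite.bddAbove (Set.finite_range _)) ⟨α, hα⟩

lemma mderiv_le_CkNorm {f : EuclideanSpace ℝ (Fin n) → ℝ} {k : ℕ} {α : Fin n → ℕ}
    (hα : ∑ i, α i ≤ k) {M : ℝ} (hM : ∀ x, ‖mderiv α f x‖ ≤ M)
    (x : EuclideanSpace ℝ (Fin n)) : ‖mderiv α f x‖ ≤ CkNorm k f :=
  (le_supx hM x).trans (le_CkNorm α hα)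

lemma CkNorm_nonneg {f : EuclideanSpace ℝ (Fin n) → ℝ} (k : ℕ) : 0 ≤ CkNorm k f :=
  Real.iSup_nonneg fun _ => Real.iSup_nonneg fun _ => norm_nonneg _

lemma CkNorm_mono {f : EuclideanSpace ℝ (Fin n) → ℝ} {k k' : ℕ} (h : k ≤ k') :
    CkNorm k f ≤ CkNorm k' f :=
  CkNorm_le fun α hα => le_CkNorm α (hα.trans h)

/-! ### The Landau inequality -/

lemma taylor_bound {g G H : ℝ → ℝ} {B : ℝ}
    (hg : ∀ s, HasDerivAt g (G s) s) (hG : ∀ s, HasDerivAt G (H s) s)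
    (hB : ∀ s, ‖H s‖ ≤ B) {h : ℝ} (hh : 0 ≤ h) :
    |g h - g 0 - h * G 0| ≤ B * h ^ 2 / 2 := by
  have hGlip : ∀ s, 0 ≤ s → |G s - G 0| ≤ B * s := by
    intro s hs
    have := norm_image_sub_le_of_norm_deriv_le_segment' (f := G) (f' := H) (a := 0) (b := s)
      (fun x _ => (hG x).hasDerivWithinAt) (fun x _ => hB x) s (by constructor <;> simp [hs])
    simpa using this
  have key : ∀ (ε : ℝ), ε = 1 ∨ ε = -1 →
      0 ≤ B * h ^ 2 / 2 - ε * (g h - g 0 - h * G 0) := by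
    intro ε hε
    set χ : ℝ → ℝ := fun s => B * s ^ 2 / 2 - ε * (g s - g 0 - s * G 0) with hχ
    have hd : ∀ s, HasDerivAt χ (B * s - ε * (G s - G 0)) s := by
      intro s
      have h1 : HasDerivAt (fun s : ℝ => B * s ^ 2 / 2) (B * s) s := by
        have := ((hasDerivAt_pow 2 s).const_mul B).div_const 2
        exact this.congr_deriv (by norm_num; ring)
      have h2 : HasDerivAt (fun s => g s - g 0 - s * G 0) (G s - G 0) s := by
        exact (((hg s).sub_const (g 0)).sub ((hasDerivAt_id s).mul_const (G 0))).congr_deriv (by simp)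
      exact h1.sub (h2.const_mul ε)
    have hmono : MonotoneOn χ (Ici (0:ℝ)) := by
      apply monotoneOn_of_deriv_nonneg (convex_Ici 0)
      · exact fun x _ => ((hd x).differentiableAt).continuousAt.continuousWithinAt
      · exact fun x _ => ((hd x).differentiableAt).differentiableWithinAt
      · intro x hx
        rw [(hd x).deriv]
        rw [interior_Ici] at hx
        have hx0 : (0:ℝ) ≤ x := le_of_lt hx
        have := hGlip x hx0
        have habs : |ε * (G x - G 0)| ≤ B * x := by
          have he : |ε| = 1 := by rcases hε with rfl | rfl <;> simp
          rw [abs_mul, he, one_mul]; exact this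
        linarith [neg_abs_le (ε * (G x - G 0)), le_abs_self (ε * (G x - G 0))]
    have := hmono (self_mem_Ici) (mem_Ici.2 hh) hh
    simpa [hχ] using this
  have k1 := key 1 (Or.inl rfl)
  have k2 := key (-1) (Or.inr rfl)
  rw [abs_le]; constructor <;> nlinarith

lemma landau {F : EuclideanSpace ℝ (Fin n) → ℝ} {i : Fin n} {A B : ℝ}
    (hF : ContDiff ℝ (2:ℕ) F) (hA : ∀ x, ‖F x‖ ≤ A)
    (hB : ∀ x, ‖pd i (pd i F) x‖ ≤ B) (x : EuclideanSpace ℝ (Fin n)) :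
    ‖pd i F x‖ ≤ 2 * Real.sqrt (A * B) := by
  have hF1 : Differentiable ℝ F := hF.differentiable (by norm_num)
  have hpd : ContDiff ℝ (1:ℕ) (pd i F) := pd_contDiff (by exact_mod_cast hF)
  have hpd1 : Differentiable ℝ (pd i F) := hpd.differentiable (by norm_num)
  set e := EuclideanSpace.single i (1:ℝ) with he
  set ℓ : ℝ → EuclideanSpace ℝ (Fin n) := fun s => x + s • e with hℓ
  have hline : ∀ s : ℝ, HasDerivAt ℓ e s := by
    intro s
    have := ((hasDerivAt_id s).smul_const e).const_add x
    simpa [hℓ] using this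
  have hg : ∀ s, HasDerivAt (F ∘ ℓ) ((pd i F ∘ ℓ) s) s := fun s =>
    ((hF1 (ℓ s)).hasFDerivAt).comp_hasDerivAt s (hline s)
  have hG : ∀ s, HasDerivAt (pd i F ∘ ℓ) ((pd i (pd i F) ∘ ℓ) s) s := fun s =>
    ((hpd1 (ℓ s)).hasFDerivAt).comp_hasDerivAt s (hline s)
  have hA0 : 0 ≤ A := le_trans (norm_nonneg _) (hA x)
  have hB0 : 0 ≤ B := le_trans (norm_nonneg _) (hB x)
  have hG00 : (pd i F ∘ ℓ) 0 = pd i F x := by simp [hℓ]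
  set p := ‖pd i F x‖ with hp
  have hp0 : 0 ≤ p := norm_nonneg _
  have key : ∀ h : ℝ, 0 ≤ h → h * p ≤ 2 * A + B * h ^ 2 / 2 := by
    intro h hh
    have ht := taylor_bound hg hG (fun s => hB (ℓ s)) hh
    rw [hG00] at ht
    rw [abs_le] at ht
    have hFh := (abs_le.1 (hA (ℓ h)))
    have hF0 := (abs_le.1 (hA (ℓ 0)))
    simp only [Function.comp_apply, Real.norm_eq_abs] at ht hFh hF0 ⊢
    have : h * pd i F x ≤ 2 * A + B * h ^ 2 / 2 ∧
        -(2 * A + B * h ^ 2 / 2) ≤ h * pd i F x := by constructor <;> linarith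
    have habs : |h * pd i F x| ≤ 2 * A + B * h ^ 2 / 2 := abs_le.2 ⟨this.2, this.1⟩
    calc h * p = |h * pd i F x| := by rw [hp, Real.norm_eq_abs, abs_mul, abs_of_nonneg hh]
      _ ≤ _ := habs
  rcases eq_or_lt_of_le hp0 with hp0' | hp0'
  · rw [← hp0']; positivity
  rcases eq_or_lt_of_le hB0 with hB0' | hB0'
  · exfalso
    have := key ((2 * A + 1) / p) (by positivity)
    rw [div_mul_cancel₀ _ (ne_of_gt hp0'), ← hB0'] at this
    linarith
  · have hkey := key (p / B) (by positivity)
    have hsq : p ^ 2 ≤ 4 * (A * B) := by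
      have h1 : p / B * p = p ^ 2 / B := by ring
      have h2 : B * (p / B) ^ 2 / 2 = p ^ 2 / (2 * B) := by
        field_simp
      rw [h1, h2] at hkey
      have := mul_le_mul_of_nonneg_right hkey (le_of_lt hB0')
      rw [div_mul_cancel₀ _ (ne_of_gt hB0')] at this
      have h3 : (2 * A + p ^ 2 / (2 * B)) * B = 2 * A * B + p ^ 2 / 2 * (B / B) := by ring
      rw [h3, div_self (ne_of_gt hB0'), mul_one] at this
      nlinarith
    calc p = Real.sqrt (p ^ 2) := (Real.sqrt_sq hp0).symm
      _ ≤ Real.sqrt (4 * (A * B)) := Real.sqrt_le_sqrt hsq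
      _ = 2 * Real.sqrt (A * B) := by
          rw [show (4:ℝ) * (A * B) = 2 ^ 2 * (A * B) by norm_num,
            Real.sqrt_mul (by positivity), Real.sqrt_sq (by norm_num)]

/-! ### The recursion step for `CkNorm` -/

lemma step_bound {f : EuclideanSpace ℝ (Fin n) → ℝ} {m k : ℕ}
    (hf : ContDiff ℝ (m : ℕ) f)
    (hb : ∀ α : Fin n → ℕ, ∑ i, α i ≤ m → ∃ M : ℝ, ∀ x, ‖mderiv α f x‖ ≤ M)
    (hk1 : 1 ≤ k) (hk : k + 1 ≤ m) :
    CkNorm k f ≤ 2 * Real.sqrt (CkNorm (k - 1) f * CkNorm (k + 1) f) := by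
  have hsqrt_base : CkNorm (k - 1) f ≤ Real.sqrt (CkNorm (k - 1) f * CkNorm (k + 1) f) := by
    have h1 : CkNorm (k - 1) f ≤ CkNorm (k + 1) f := CkNorm_mono (by omega)
    have h2 : 0 ≤ CkNorm (k - 1) f := CkNorm_nonneg _
    calc CkNorm (k - 1) f = Real.sqrt ((CkNorm (k - 1) f) ^ 2) := (Real.sqrt_sq h2).symm
      _ ≤ _ := Real.sqrt_le_sqrt (by nlinarith)
  have base : CkNorm (k - 1) f ≤ 2 * Real.sqrt (CkNorm (k - 1) f * CkNorm (k + 1) f) := by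
    have := Real.sqrt_nonneg (CkNorm (k - 1) f * CkNorm (k + 1) f)
    linarith
  apply CkNorm_le
  intro α hα
  by_cases hz : ∑ i, α i = 0
  · exact le_trans (le_CkNorm α (by omega)) base
  · -- the smallest index with a nonzero entry
    have hex : (Finset.univ.filter (fun j => α j ≠ 0)).Nonempty := by
      rcases Finset.exists_ne_zero_of_sum_ne_zero hz with ⟨i, _, hi⟩
      exact ⟨i, by simp [hi]⟩
    set i := (Finset.univ.filter (fun j => α j ≠ 0)).min' hex with hidef
    have hi : 1 ≤ α i := by
      have := (Finset.mem_filter.1 ((Finset.univ.filter (fun j => α j ≠ 0)).min'_mem hex)).2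
      rw [← hidef] at this
      omega
    have hlow : ∀ j, j < i → α j = 0 := by
      intro j hj
      by_contra hj0
      have : i ≤ j := Finset.min'_le _ j (by simp [hj0])
      omega
    set β := Function.update α i (α i - 1) with hβdef
    set γ := Function.update α i (α i + 1) with hγdef
    have hsumα : α i + ∑ j ∈ Finset.univ.erase i, α j = ∑ j, α j :=
      Finset.add_sum_erase _ α (Finset.mem_univ i)
    have herase : ∀ v : ℕ, ∑ j ∈ Finset.univ.erase i, Function.update α i v j
        = ∑ j ∈ Finset.univ.erase i, α j := by
      intro v
      apply Finset.sum_congr rfl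
      intro j hj
      exact Function.update_of_ne (Finset.ne_of_mem_erase hj) _ _
    have hsumβ : ∑ j, β j = ∑ j, α j - 1 := by
      have h1 : β i + ∑ j ∈ Finset.univ.erase i, β j = ∑ j, β j :=
        Finset.add_sum_erase _ β (Finset.mem_univ i)
      have h2 : β i = α i - 1 := Function.update_self _ _ _
      have h3 := herase (α i - 1)
      have h4 : ∑ j ∈ Finset.univ.erase i, β j = ∑ j ∈ Finset.univ.erase i, α j := h3
      omega
    have hsumγ : ∑ j, γ j = ∑ j, α j + 1 := by
      have h1 : γ i + ∑ j ∈ Finset.univ.erase i, γ j = ∑ j, γ j :=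
        Finset.add_sum_erase _ γ (Finset.mem_univ i)
      have h2 : γ i = α i + 1 := Function.update_self _ _ _
      have h4 : ∑ j ∈ Finset.univ.erase i, γ j = ∑ j ∈ Finset.univ.erase i, α j :=
        herase (α i + 1)
      omega
    have hF2 : ContDiff ℝ (2:ℕ) (mderiv β f) :=
      mderiv_contDiff β (contDiff_of_nat_le hf (by omega))
    have id1 : mderiv α f = pd i (mderiv β f) := mderiv_pull hi hlow
    have id2 : mderiv γ f = pd i (pd i (mderiv β f)) := by
      have hγi : 1 ≤ γ i := by
        rw [hγdef, Function.update_self]; omega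
      have hγlow : ∀ j, j < i → γ j = 0 := by
        intro j hj
        rw [hγdef, Function.update_of_ne (ne_of_lt hj)]
        exact hlow j hj
      have hupd : Function.update γ i (γ i - 1) = α := by
        funext j
        by_cases hji : j = i
        · subst hji
          rw [Function.update_self, hγdef, Function.update_self]
          omega
        · rw [Function.update_of_ne hji, hγdef, Function.update_of_ne hji]
      have := mderiv_pull (f := f) hγi hγlow
      rw [hupd] at this
      rw [this, id1]
    obtain ⟨Mβ, hMβ⟩ := hb β (by omega)
    obtain ⟨Mγ, hMγ⟩ := hb γ (by omega)
    have hA : ∀ x, ‖mderiv β f x‖ ≤ CkNorm (k - 1) f :=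
      mderiv_le_CkNorm (by omega) hMβ
    have hB : ∀ x, ‖pd i (pd i (mderiv β f)) x‖ ≤ CkNorm (k + 1) f := by
      intro x
      rw [← id2]
      exact mderiv_le_CkNorm (by omega) hMγ x
    apply supx_le
    intro x
    rw [id1]
    exact landau hF2 hA hB x

/-! ### The discrete convexity lemma -/

lemma seq_convex {m : ℕ} (hm : 1 ≤ m) (d : ℕ → ℝ)
    (hconv : ∀ k, 1 ≤ k → k ≤ m - 1 → 2 * d k ≤ d (k - 1) + d (k + 1)) :
    (m : ℝ) * d (m - 1) ≤ d 0 + ((m - 1 : ℕ) : ℝ) * d m := by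
  set e : ℕ → ℝ := fun j => d (j + 1) - d j with he
  have hmono : ∀ j, j + 1 ≤ m - 1 → e j ≤ e (j + 1) := by
    intro j hj
    have h2 := hconv (j + 1) (by omega) hj
    simp only [Nat.add_sub_cancel] at h2
    simp only [he]
    linarith
  have echain : ∀ q j, j + q = m - 1 → e j ≤ e (m - 1) := by
    intro q
    induction q with
    | zero => intro j hj; rw [show j = m - 1 by omega]
    | succ q ih =>
        intro j hj
        exact le_trans (hmono j (by omega)) (ih (j + 1) (by omega))
  have hsum : ∑ j ∈ Finset.range (m - 1), e j = d (m - 1) - d 0 :=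
    Finset.sum_range_sub d (m - 1)
  have hsum_le : ∑ j ∈ Finset.range (m - 1), e j ≤ (m - 1) • e (m - 1) := by
    have := Finset.sum_le_card_nsmul (Finset.range (m - 1)) e (e (m - 1))
      (fun j hj => echain (m - 1 - j) j (by
        have := Finset.mem_range.1 hj; omega))
    simpa using this
  rw [hsum, nsmul_eq_mul] at hsum_le
  have hcast : ((m - 1 : ℕ) : ℝ) = (m : ℝ) - 1 := by
    push_cast [hm]; ring
  have hem : e (m - 1) = d m - d (m - 1) := by
    simp only [he]; rw [show m - 1 + 1 = m by omega]
  rw [hem] at hsum_le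
  rw [hcast] at hsum_le ⊢
  nlinarith [hsum_le]

end CkInterpAux

/-- For every t ∈ ℕ there is c_t > 0 such that every f ∈ C^{t+1}(ℝⁿ) with all
derivatives up to order t+1 bounded satisfies
‖f‖_{C^t} ≤ c_t ‖f‖_{C⁰}^{1/(t+1)} ‖f‖_{C^{t+1}}^{t/(t+1)}. -/
theorem Ck_interpolation (n : ℕ) (t : ℕ) :
    ∃ c : ℝ, 0 < c ∧ ∀ f : EuclideanSpace ℝ (Fin n) → ℝ,
      ContDiff ℝ (t + 1) f →
      (∀ α : Fin n → ℕ, ∑ i, α i ≤ t + 1 → ∃ M : ℝ, ∀ x, ‖mderiv α f x‖ ≤ M) →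
      CkNorm t f ≤
        c * CkNorm 0 f ^ ((1:ℝ) / (t + 1)) * CkNorm (t + 1) f ^ ((t:ℝ) / (t + 1)) := by
  classical
  open CkInterpAux in
  refine ⟨(2:ℝ) ^ (2 * t), by positivity, ?_⟩
  intro f hf hb
  have hf' : ContDiff ℝ ((t + 1 : ℕ) : ℕ) f := by exact_mod_cast hf
  -- nonnegativity of the three norms
  have h0n : 0 ≤ CkNorm 0 f := CkNorm_nonneg 0
  have htn : 0 ≤ CkNorm (t + 1) f := CkNorm_nonneg (t + 1)
  by_cases h0 : CkNorm 0 f = 0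
  · -- then f ≡ 0 and everything vanishes
    obtain ⟨M, hM⟩ := hb (fun _ => 0) (by simp)
    have hmz : mderiv (fun _ => (0:ℕ)) f = f := mderiv_eq_self (fun _ => rfl)
    have hfx : ∀ x, f x = 0 := by
      intro x
      have := mderiv_le_CkNorm (f := f) (k := 0) (α := fun _ => 0) (by simp) hM x
      rw [hmz] at this
      rw [h0] at this
      simpa using le_antisymm this (norm_nonneg _) |>.symm ▸ (norm_eq_zero.1 (le_antisymm this (norm_nonneg _)))
    have hfeq : f = fun _ => (0:ℝ) := funext hfx
    have hzero : CkNorm t f ≤ 0 := by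
      apply CkNorm_le
      intro α hα
      apply supx_le
      intro x
      rw [hfeq, mderiv_zero_fun]
      simp
    have : (0:ℝ) ≤ (2:ℝ) ^ (2 * t) * CkNorm 0 f ^ ((1:ℝ) / (t + 1))
        * CkNorm (t + 1) f ^ ((t:ℝ) / (t + 1)) := by
      apply mul_nonneg (mul_nonneg (by positivity) (Real.rpow_nonneg h0n _))
        (Real.rpow_nonneg htn _)
    linarith
  · have hpos0 : 0 < CkNorm 0 f := lt_of_le_of_ne h0n (Ne.symm h0)
    have hposk : ∀ k : ℕ, 0 < CkNorm k f := fun k =>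
      lt_of_lt_of_le hpos0 (CkNorm_mono (Nat.zero_le k))
    set m := t + 1 with hm
    set d : ℕ → ℝ := fun k =>
      Real.log (CkNorm k f) - 2 * Real.log 2 * ((k : ℝ) * ((m : ℝ) - (k : ℝ))) with hd
    have hL2 : 0 < Real.log 2 := Real.log_pos one_lt_two
    have hconv : ∀ k, 1 ≤ k → k ≤ m - 1 → 2 * d k ≤ d (k - 1) + d (k + 1) := by
      intro k hk1 hk2
      have hs := step_bound (f := f) (m := m) hf' hb hk1 (by omega)
      have hsp : 0 < Real.sqrt (CkNorm (k-1) f * CkNorm (k+1) f) :=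
        Real.sqrt_pos.2 (mul_pos (hposk _) (hposk _))
      have hlog := Real.log_le_log (hposk k) hs
      rw [Real.log_mul two_ne_zero (ne_of_gt hsp),
        Real.log_sqrt (le_of_lt (mul_pos (hposk (k-1)) (hposk (k+1)))),
        Real.log_mul (ne_of_gt (hposk (k-1))) (ne_of_gt (hposk (k+1)))] at hlog
      have expand : (d (k - 1) + d (k + 1)) - 2 * d k
          = (Real.log (CkNorm (k-1) f) + Real.log (CkNorm (k+1) f)
              - 2 * Real.log (CkNorm k f)) + 4 * Real.log 2 := by
        simp only [hd]
        push_cast [Nat.cast_sub hk1]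
        ring
      linarith [expand, hlog]
    have hseq := seq_convex (by omega : 1 ≤ m) d hconv
    simp only [hm, Nat.add_sub_cancel] at hseq
    -- hseq : (↑(t+1)) * d t ≤ d 0 + ↑t * d (t+1)
    have key2 : ((t:ℝ) + 1) * Real.log (CkNorm t f)
        ≤ Real.log (CkNorm 0 f) + (t:ℝ) * Real.log (CkNorm (t+1) f)
          + 2 * Real.log 2 * (t:ℝ) * ((t:ℝ) + 1) := by
      simp only [hd, hm] at hseq
      push_cast at hseq
      nlinarith [hseq]
    have hM : (0:ℝ) < (t:ℝ) + 1 := by positivity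
    have goal_log : Real.log (CkNorm t f)
        ≤ 2 * (t:ℝ) * Real.log 2 + (1 / ((t:ℝ) + 1)) * Real.log (CkNorm 0 f)
          + ((t:ℝ) / ((t:ℝ) + 1)) * Real.log (CkNorm (t+1) f) := by
      have hexp : ((t:ℝ) + 1) * (2 * (t:ℝ) * Real.log 2
          + (1 / ((t:ℝ) + 1)) * Real.log (CkNorm 0 f)
          + ((t:ℝ) / ((t:ℝ) + 1)) * Real.log (CkNorm (t+1) f))
          = 2 * Real.log 2 * (t:ℝ) * ((t:ℝ) + 1)
            + Real.log (CkNorm 0 f) + (t:ℝ) * Real.log (CkNorm (t+1) f) := by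
        have hne : (t:ℝ) + 1 ≠ 0 := ne_of_gt hM
        rw [mul_add, mul_add]
        rw [show ((t:ℝ)+1) * ((1 / ((t:ℝ) + 1)) * Real.log (CkNorm 0 f))
              = (((t:ℝ)+1) / ((t:ℝ)+1)) * Real.log (CkNorm 0 f) by ring,
            show ((t:ℝ)+1) * (((t:ℝ) / ((t:ℝ) + 1)) * Real.log (CkNorm (t+1) f))
              = (((t:ℝ)+1) / ((t:ℝ)+1)) * ((t:ℝ) * Real.log (CkNorm (t+1) f)) by ring,
            div_self hne]
        ring
      have h2 : ((t:ℝ) + 1) * Real.log (CkNorm t f)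
          ≤ ((t:ℝ) + 1) * (2 * (t:ℝ) * Real.log 2
            + (1 / ((t:ℝ) + 1)) * Real.log (CkNorm 0 f)
            + ((t:ℝ) / ((t:ℝ) + 1)) * Real.log (CkNorm (t+1) f)) := by
        rw [hexp]; linarith [key2]
      exact le_of_mul_le_mul_left h2 hM
    -- convert the logarithmic inequality to the stated one
    have hrw : (2:ℝ) ^ (2 * t) * CkNorm 0 f ^ ((1:ℝ) / (t + 1))
        * CkNorm (t + 1) f ^ ((t:ℝ) / (t + 1))
        = Real.exp (2 * (t:ℝ) * Real.log 2 + (1 / ((t:ℝ) + 1)) * Real.log (CkNorm 0 f)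
          + ((t:ℝ) / ((t:ℝ) + 1)) * Real.log (CkNorm (t+1) f)) := by
      rw [Real.exp_add, Real.exp_add]
      congr 1
      · congr 1
        · rw [show (2:ℝ) * (t:ℝ) * Real.log 2 = ((2*t : ℕ):ℝ) * Real.log 2 by push_cast; ring,
            ← Real.log_pow, Real.exp_log (by positivity)]
        · rw [Real.rpow_def_of_pos hpos0]
          congr 1
          ring
      · rw [Real.rpow_def_of_pos (hposk (t+1))]
        congr 1
        ring
    rw [hrw]
    calc CkNorm t f = Real.exp (Real.log (CkNorm t f)) := (Real.exp_log (hposk t)).symm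
      _ ≤ _ := Real.exp_le_exp.2 goal_log
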